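/- In Example 2 (single producer with cost a·g + w·u, 0 ≤ g ≤ u·g_max; inverse demand p(d) = 2a(1 − d/d_max), i.e., benefit B(d) = 2a·d − a·d²/d_max on [0, d_max]; assume 6w/a ≤ d_max < g_max), the unique primal solution is u* = 1, g* = d* = d_max/2 with optimal welfare U = a·d_max/4 − w, and the unique convex hull price is p⁺ = a + w/g_max, with duality gap U^D − U = w·(1 − d_max/(2g_max) + w·d_max/(4a·g_max²)). -/
import Mathlib

set_option maxHeartbeats 2000000


/-- Example 2: producer cost `a·g + w·u` with `0 ≤ g ≤ u·g_max`, benefit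
`B d = 2a·d − a·d²/d_max` on `[0, d_max]`, with `6w/a ≤ d_max < g_max`. The unique
primal solution is `u* = 1`, `g* = d* = d_max/2` with welfare `U = a·d_max/4 − w`; the
unique convex hull price is `p⁺ = a + w/g_max`; and the duality gap is
`U^D − U = w(1 − d_max/(2g_max) + w·d_max/(4a·g_max²))`. -/
theorem stmt12 (a w gmax dmax : ℝ)
    (ha : 0 < a) (hw : 0 < w) (h1 : 6 * w / a ≤ dmax) (h2 : dmax < gmax)
    (B : ℝ → ℝ) (hB : B = fun d => 2 * a * d - a * d ^ 2 / dmax)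
    (F : Set (ℝ × ℝ × ℝ))
    (hF : F = {x | (x.1 = 0 ∨ x.1 = 1) ∧ 0 ≤ x.2.1 ∧ x.2.1 ≤ x.1 * gmax ∧
        0 ≤ x.2.2 ∧ x.2.2 ≤ dmax ∧ x.2.1 = x.2.2})
    (obj : ℝ × ℝ × ℝ → ℝ) (hobj : obj = fun x => B x.2.2 - a * x.2.1 - w * x.1)
    (cons prod : ℝ → ℝ)
    (hcons : ∀ p, IsGreatest {v | ∃ d ∈ Set.Icc (0:ℝ) dmax, v = B d - p * d} (cons p))
    (hprod : ∀ p, IsGreatest {v | ∃ x : ℝ × ℝ,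
        ((x.1 = 0 ∨ x.1 = 1) ∧ 0 ≤ x.2 ∧ x.2 ≤ x.1 * gmax) ∧
        v = p * x.2 - a * x.2 - w * x.1} (prod p)) :
    ((1, dmax / 2, dmax / 2) ∈ F ∧
     (∀ x ∈ F, obj x ≤ obj (1, dmax / 2, dmax / 2)) ∧
     (∀ x ∈ F, obj x = obj (1, dmax / 2, dmax / 2) → x = (1, dmax / 2, dmax / 2)) ∧
     obj (1, dmax / 2, dmax / 2) = a * dmax / 4 - w) ∧
    (∀ p, cons (a + w / gmax) + prod (a + w / gmax) ≤ cons p + prod p) ∧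
    (∀ p, cons p + prod p = cons (a + w / gmax) + prod (a + w / gmax) →
      p = a + w / gmax) ∧
    cons (a + w / gmax) + prod (a + w / gmax) - (a * dmax / 4 - w)
      = w * (1 - dmax / (2 * gmax) + w * dmax / (4 * a * gmax ^ 2)) := by
  subst hB hF hobj
  have h6 : 6 * w ≤ dmax * a := (div_le_iff₀ ha).mp h1
  have hd : 0 < dmax := by nlinarith
  have hg : 0 < gmax := hd.trans h2
  set P : ℝ := a + w / gmax with hP
  set D : ℝ := (a - w / gmax) * dmax / (2 * a) with hDdef
  have hwg : w / gmax < a := by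
    rw [div_lt_iff₀ hg]; nlinarith
  have hwg0 : 0 < w / gmax := div_pos hw hg
  have hD0 : 0 < D := by
    apply div_pos; nlinarith; linarith
  have hDlt : D < dmax := by
    rw [hDdef, div_lt_iff₀ (by linarith : (0:ℝ) < 2 * a)]
    nlinarith
  clear_value P D
  -- value of prod at P is 0
  have hprodP : prod P = 0 := by
    refine ((hprod P).unique ⟨⟨(0, 0), ⟨Or.inl rfl, le_refl 0, by simp⟩, by ring⟩, ?_⟩)
    rintro v ⟨⟨u, g⟩, ⟨hu | hu, hg0, hgu⟩, rfl⟩ <;> subst hu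
    · have hgz : g = 0 := le_antisymm (by simpa using hgu) hg0
      simp [hgz]
    · have hgle : g ≤ gmax := by simpa using hgu
      have h3 : w / gmax * g ≤ w := by
        rw [div_mul_eq_mul_div, div_le_iff₀ hg]; nlinarith
      have h4 : P * g - a * g = w / gmax * g := by rw [hP]; ring
      show P * g - a * g - w * 1 ≤ 0
      linarith
  -- value of cons at P
  have hconsP : cons P = (2 * a * D - a * D ^ 2 / dmax) - P * D := by
    refine (hcons P).unique ⟨⟨D, ⟨hD0.le, hDlt.le⟩, rfl⟩, ?_⟩
    rintro v ⟨d, ⟨hd0, hd1⟩, rfl⟩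
    show (2 * a * d - a * d ^ 2 / dmax) - P * d ≤ _
    have key : ((2 * a * d - a * d ^ 2 / dmax) - P * d)
        - ((2 * a * D - a * D ^ 2 / dmax) - P * D) = -(a / dmax) * (d - D) ^ 2 := by
      rw [hDdef, hP]; field_simp; ring
    nlinarith [sq_nonneg (d - D), div_pos ha hd]
  have hconsLB : ∀ p, (2 * a * D - a * D ^ 2 / dmax) - p * D ≤ cons p := fun p =>
    (hcons p).2 ⟨D, ⟨hD0.le, hDlt.le⟩, rfl⟩
  have hprodLB0 : ∀ p, 0 ≤ prod p := by
    intro p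
    refine (hprod p).2 ⟨(0, 0), ⟨Or.inl rfl, le_refl 0, ?_⟩, by ring⟩
    rw [zero_mul]
  have hprodLB1 : ∀ p, p * gmax - a * gmax - w ≤ prod p := by
    intro p
    refine (hprod p).2 ⟨(1, gmax), ⟨Or.inr rfl, hg.le, ?_⟩, ?_⟩
    · show gmax ≤ 1 * gmax
      rw [one_mul]
    · show p * gmax - a * gmax - w = p * gmax - a * gmax - w * 1
      ring
  have hPg : P * gmax = a * gmax + w := by rw [hP]; field_simp
  -- strict lower bounds away from P
  have hmin : ∀ p, cons P + prod P + |p - P| * min D (gmax - D) ≤ cons p + prod p := by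
    intro p
    rcases le_total p P with hp | hp
    · have h3 := hconsLB p
      have h4 := hprodLB0 p
      have habs : |p - P| = P - p := by rw [abs_of_nonpos (by linarith)]; ring
      rw [habs, hconsP, hprodP]
      have e0 : (P - p) * min D (gmax - D) ≤ (P - p) * D :=
        mul_le_mul_of_nonneg_left (min_le_left _ _) (by linarith)
      have e1 : (P - p) * D = P * D - p * D := by ring
      linarith
    · have h3 := hconsLB p
      have h4 := hprodLB1 p
      have habs : |p - P| = p - P := abs_of_nonneg (by linarith)
      rw [habs, hconsP, hprodP]
      have e0 : (p - P) * min D (gmax - D) ≤ (p - P) * (gmax - D) :=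
        mul_le_mul_of_nonneg_left (min_le_right _ _) (by linarith)
      have e1 : (p - P) * (gmax - D) = p * gmax - p * D - P * gmax + P * D := by ring
      linarith
  have hmd : 0 < min D (gmax - D) := lt_min hD0 (by linarith)
  have hval : (2 * a * (dmax / 2) - a * (dmax / 2) ^ 2 / dmax) - a * (dmax / 2) - w * 1
      = a * dmax / 4 - w := by field_simp; ring
  refine ⟨⟨?_, ?_, ?_, ?_⟩, ?_, ?_, ?_⟩
  · -- feasibility
    refine Set.mem_setOf.mpr ⟨Or.inr rfl, by linarith, ?_, by linarith, by linarith, rfl⟩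
    show dmax / 2 ≤ 1 * gmax
    rw [one_mul]; linarith
  · -- optimality
    intro x hx
    obtain ⟨u, g, d⟩ := x
    simp only [Set.mem_setOf_eq] at hx
    obtain ⟨hu, hg0, hgu, hd0, hd1, hgd⟩ := hx
    dsimp only at hu hg0 hgu hd0 hd1 hgd ⊢
    rw [hval]
    subst hgd
    rcases hu with hu | hu <;> subst hu
    · have hgz : g = 0 := le_antisymm (by simpa using hgu) hg0
      rw [hgz]
      have : (2:ℝ) * a * 0 - a * 0 ^ 2 / dmax - a * 0 - w * 0 = 0 := by ring
      rw [this]; nlinarith [mul_pos ha hd]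
    · have key : (a * dmax / 4 - w) - ((2 * a * g - a * g ^ 2 / dmax) - a * g - w * 1)
          = a / dmax * (dmax / 2 - g) ^ 2 := by field_simp; ring
      nlinarith [sq_nonneg (dmax / 2 - g), div_pos ha hd]
  · -- uniqueness of primal solution
    intro x hx heq
    obtain ⟨u, g, d⟩ := x
    simp only [Set.mem_setOf_eq] at hx
    obtain ⟨hu, hg0, hgu, hd0, hd1, hgd⟩ := hx
    dsimp only at hu hg0 hgu hd0 hd1 hgd heq
    rw [hval] at heq
    subst hgd
    rcases hu with hu | hu <;> subst hu
    · exfalso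
      have hgz : g = 0 := le_antisymm (by simpa using hgu) hg0
      rw [hgz] at heq
      norm_num at heq
      nlinarith [mul_pos ha hd]
    · have key : (a * dmax / 4 - w) - ((2 * a * g - a * g ^ 2 / dmax) - a * g - w * 1)
          = a / dmax * (dmax / 2 - g) ^ 2 := by field_simp; ring
      have h0 : a / dmax * (dmax / 2 - g) ^ 2 = 0 := by linarith
      have hda : 0 < a / dmax := div_pos ha hd
      have h1 : (dmax / 2 - g) ^ 2 = 0 := by
        nlinarith [sq_nonneg (dmax / 2 - g)]
      have hgval : g = dmax / 2 := by nlinarith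
      rw [hgval]
  · -- primal value
    dsimp only
    rw [hval]
  · -- minimality
    intro p
    have h := hmin p
    nlinarith [abs_nonneg (p - P), hmd]
  · -- uniqueness of price
    intro p hp
    by_contra hne
    have habs : 0 < |p - P| := abs_pos.mpr (sub_ne_zero.mpr hne)
    have h := hmin p
    nlinarith [mul_pos habs hmd]
  · -- gap
    rw [hconsP, hprodP, hDdef, hP]
    field_simp
    ring
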